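/- Let x, y, z, u : ℂ → ℂ satisfy the system x' = (u + y² + z²)x, y' = (u + y² - 2z²)y, z' = (u - 2y² + z²)z, u' = u² - y⁴ + y²z² - z⁴. Then u satisfies the Chazy equation u''' = 6(2 u u'' - 3 (u')²). -/

import Mathlib

open Complex

/-- System (19): `u` satisfies the Chazy equation. -/
theorem system19_chazy (x y z u : ℂ → ℂ)
    (hx : Differentiable ℂ x) (hy : Differentiable ℂ y)
    (hz : Differentiable ℂ z) (hu : Differentiable ℂ u)
    (hdx : ∀ τ, deriv x τ = (u τ + (y τ) ^ 2 + (z τ) ^ 2) * x τ)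
    (hdy : ∀ τ, deriv y τ = (u τ + (y τ) ^ 2 - 2 * (z τ) ^ 2) * y τ)
    (hdz : ∀ τ, deriv z τ = (u τ - 2 * (y τ) ^ 2 + (z τ) ^ 2) * z τ)
    (hdu : ∀ τ, deriv u τ = (u τ) ^ 2 - (y τ) ^ 4 + (y τ) ^ 2 * (z τ) ^ 2 - (z τ) ^ 4) :
    ∀ τ, deriv (deriv (deriv u)) τ =
      6 * (2 * u τ * deriv (deriv u) τ - 3 * (deriv u τ) ^ 2) := by
  have Hu : ∀ τ, HasDerivAt u
      ((u τ) ^ 2 - (y τ) ^ 4 + (y τ) ^ 2 * (z τ) ^ 2 - (z τ) ^ 4) τ := fun τ =>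
    (hdu τ) ▸ (hu τ).hasDerivAt
  have Hy : ∀ τ, HasDerivAt y ((u τ + (y τ) ^ 2 - 2 * (z τ) ^ 2) * y τ) τ := fun τ =>
    (hdy τ) ▸ (hy τ).hasDerivAt
  have Hz : ∀ τ, HasDerivAt z ((u τ - 2 * (y τ) ^ 2 + (z τ) ^ 2) * z τ) τ := fun τ =>
    (hdz τ) ▸ (hz τ).hasDerivAt
  -- first derivative as a function
  have hD1 : deriv u = fun t =>
      (u t) ^ 2 - (y t) ^ 4 + (y t) ^ 2 * (z t) ^ 2 - (z t) ^ 4 := funext hdu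
  have H1 : ∀ τ, HasDerivAt (fun t =>
      (u t) ^ 2 - (y t) ^ 4 + (y t) ^ 2 * (z t) ^ 2 - (z t) ^ 4) _ τ := fun τ =>
    ((((Hu τ).pow 2).sub ((Hy τ).pow 4)).add (((Hy τ).pow 2).mul ((Hz τ).pow 2))).sub
      ((Hz τ).pow 4)
  -- second derivative as a function
  have hd2 : ∀ τ, deriv (deriv u) τ =
      2 * (u τ) ^ 3 - 6 * u τ * (y τ) ^ 4 + 6 * u τ * (y τ) ^ 2 * (z τ) ^ 2
        - 6 * u τ * (z τ) ^ 4 - 4 * (y τ) ^ 6 + 6 * (y τ) ^ 4 * (z τ) ^ 2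
        + 6 * (y τ) ^ 2 * (z τ) ^ 4 - 4 * (z τ) ^ 6 := by
    intro τ
    rw [hD1, (H1 τ).deriv]
    simp only [Pi.pow_apply, Pi.mul_apply]
    ring
  have hD2 : deriv (deriv u) = fun t =>
      2 * (u t) ^ 3 - 6 * u t * (y t) ^ 4 + 6 * u t * (y t) ^ 2 * (z t) ^ 2
        - 6 * u t * (z t) ^ 4 - 4 * (y t) ^ 6 + 6 * (y t) ^ 4 * (z t) ^ 2
        + 6 * (y t) ^ 2 * (z t) ^ 4 - 4 * (z t) ^ 6 := funext hd2
  have H2 : ∀ τ, HasDerivAt (fun t =>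
      2 * (u t) ^ 3 - 6 * u t * (y t) ^ 4 + 6 * u t * (y t) ^ 2 * (z t) ^ 2
        - 6 * u t * (z t) ^ 4 - 4 * (y t) ^ 6 + 6 * (y t) ^ 4 * (z t) ^ 2
        + 6 * (y t) ^ 2 * (z t) ^ 4 - 4 * (z t) ^ 6) _ τ := fun τ =>
    ((((((((Hu τ).pow 3).const_mul 2).sub
        (((Hu τ).const_mul 6).mul ((Hy τ).pow 4))).add
        ((((Hu τ).const_mul 6).mul ((Hy τ).pow 2)).mul ((Hz τ).pow 2))).sub
        (((Hu τ).const_mul 6).mul ((Hz τ).pow 4))).sub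
        (((Hy τ).pow 6).const_mul 4)).add
        ((((Hy τ).pow 4).const_mul 6).mul ((Hz τ).pow 2))).add
        ((((Hy τ).pow 2).const_mul 6).mul ((Hz τ).pow 4)) |>.sub
        (((Hz τ).pow 6).const_mul 4)
  intro τ
  rw [hD2, (H2 τ).deriv, hdu τ]
  beta_reduce
  simp only [Pi.pow_apply, Pi.mul_apply]
  ring
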